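/- Let K be a field with an additive valuation v : K → ℝ ∪ {∞}. Let n ≥ 2, let α_1,…,α_n ∈ K with v(α_i) = A_i, ordered by indices i_1,…,i_n so that A_{i_1} < A_{i_2} < ⋯ < A_{i_n}. Fix 1 ≤ p ≤ n−1 and let b, c ∈ K satisfy (b−α_1)⋯(b−α_n) = (c−α_1)⋯(c−α_n), v(b) = A_{i_p}, and v(c) = X_c with A_{i_p} < X_c < A_{i_{p+1}}. Define B_j = (b−α_j)/(c−α_j) for j = 1,…,n. Then v(B_{i_j}) = 0 for j = 1,…,p−1; v(B_{i_p}) = (n−p)·(X_c − A_{i_p}); and v(B_{i_j}) = A_{i_p} − X_c for j = p+1,…,n. In particular Σ_{j=1}^n v(B_{i_j}) = 0. -/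
import Mathlib

open Finset

/-- Valuations of `B_j = (b-α_j)/(c-α_j)` (Corollary 5.3 of the paper).
The indices are `0`-based: `σ j` plays the role of `i_{j+1}`, and `p : Fin n`
(with `p + 1 < n`) plays the role of the `1`-based index `p+1 ∈ {1,…,n-1}`;
accordingly the coefficient `n - p` (`1`-based) appears as `n - p - 1`. -/
theorem stmt_12 (K : Type*) [Field K] (v : K → WithTop ℝ)
    (hv_top : ∀ x : K, v x = ⊤ ↔ x = 0)
    (hv_mul : ∀ x y : K, v (x * y) = v x + v y)
    (hv_add : ∀ x y : K, min (v x) (v y) ≤ v (x + y))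
    (hv_eq : ∀ x y : K, v x ≠ v y → v (x + y) = min (v x) (v y))
    (n : ℕ) (hn : 2 ≤ n)
    (α : Fin n → K) (A : Fin n → ℝ)
    (hA : ∀ i : Fin n, v (α i) = ((A i : ℝ) : WithTop ℝ))
    (σ : Equiv.Perm (Fin n))
    (hord : StrictMono fun j : Fin n => A (σ j))
    (p : Fin n) (hp : (p : ℕ) + 1 < n)
    (b c : K) (Xc : ℝ)
    (hprod : ∏ i : Fin n, (b - α i) = ∏ i : Fin n, (c - α i))
    (hvb : v b = ((A (σ p) : ℝ) : WithTop ℝ))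
    (hvc : v c = ((Xc : ℝ) : WithTop ℝ))
    (hX1 : A (σ p) < Xc) (hX2 : Xc < A (σ ⟨(p : ℕ) + 1, hp⟩))
    (B : Fin n → K) (hB : ∀ j : Fin n, B j = (b - α j) / (c - α j)) :
    (∀ j : Fin n, j < p → v (B (σ j)) = ((0 : ℝ) : WithTop ℝ)) ∧
    v (B (σ p)) = ((((n : ℝ) - (p : ℕ) - 1) * (Xc - A (σ p)) : ℝ) : WithTop ℝ) ∧
    (∀ j : Fin n, p < j → v (B (σ j)) = ((A (σ p) - Xc : ℝ) : WithTop ℝ)) ∧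
    (∑ j : Fin n, v (B (σ j))) = ((0 : ℝ) : WithTop ℝ) := by
  -- basic valuation facts
  have hfin : ∀ (x : K) (a : ℝ), v x = (a : WithTop ℝ) → x ≠ 0 := by
    intro x a h hx
    rw [(hv_top x).mpr hx] at h
    exact (WithTop.top_ne_coe h)
  have hv1 : v 1 = ((0 : ℝ) : WithTop ℝ) := by
    have h := hv_mul 1 1
    rw [one_mul] at h
    have hne : v 1 ≠ ⊤ := by simp [hv_top]
    obtain ⟨r, hr⟩ := WithTop.ne_top_iff_exists.mp hne
    rw [← hr, ← WithTop.coe_add, WithTop.coe_eq_coe] at h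
    have : r = 0 := by linarith
    rw [← hr, this]
  have hvneg : ∀ x : K, v (-x) = v x := by
    have hm1 : v (-1 : K) = ((0 : ℝ) : WithTop ℝ) := by
      have h := hv_mul (-1 : K) (-1)
      rw [neg_mul_neg, one_mul, hv1] at h
      have hne : v (-1 : K) ≠ ⊤ := by simp [hv_top]
      obtain ⟨r, hr⟩ := WithTop.ne_top_iff_exists.mp hne
      rw [← hr, ← WithTop.coe_add, WithTop.coe_eq_coe] at h
      have hr0 : r = 0 := by
        have : (0 : ℝ) = r + r := by exact_mod_cast h
        linarith
      rw [← hr, hr0]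
    intro x
    have h := hv_mul (-1 : K) x
    rw [neg_one_mul, hm1] at h
    simpa using h
  have hsub : ∀ x y : K, v x ≠ v y → v (x - y) = min (v x) (v y) := by
    intro x y h
    rw [sub_eq_add_neg, hv_eq x (-y) (by rw [hvneg]; exact h), hvneg]
  have hdiv : ∀ (x y : K) (a e : ℝ), v x = (a : WithTop ℝ) → v y = (e : WithTop ℝ) →
      v (x / y) = ((a - e : ℝ) : WithTop ℝ) := by
    intro x y a e hx hy
    have hy0 : y ≠ 0 := hfin y e hy
    have hx0 : x ≠ 0 := hfin x a hx
    have h := hv_mul (x / y) y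
    rw [div_mul_cancel₀ _ hy0, hx, hy] at h
    have hne : v (x / y) ≠ ⊤ := (hv_top _).not.mpr (div_ne_zero hx0 hy0)
    obtain ⟨r, hr⟩ := WithTop.ne_top_iff_exists.mp hne
    rw [← hr, ← WithTop.coe_add, WithTop.coe_eq_coe] at h
    rw [← hr]
    congr 1
    linarith
  have hvprod : ∀ (s : Finset (Fin n)) (f : Fin n → K),
      v (∏ i ∈ s, f i) = ∑ i ∈ s, v (f i) := by
    intro s f
    induction s using Finset.cons_induction with
    | empty => simpa using hv1
    | cons a s ha ih => rw [Finset.prod_cons, Finset.sum_cons, hv_mul, ih]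
  have hmono := hord.monotone
  -- valuation of c - α (σ j)
  have hvcle : ∀ j : Fin n, j ≤ p → v (c - α (σ j)) = ((A (σ j) : ℝ) : WithTop ℝ) := by
    intro j hj
    have hlt : A (σ j) < Xc := lt_of_le_of_lt (hmono hj) hX1
    rw [hsub c (α (σ j)) (by rw [hvc, hA]; exact_mod_cast hlt.ne'), hvc, hA]
    rw [min_comm]
    exact_mod_cast min_eq_left hlt.le
  have hjgt : ∀ j : Fin n, p < j → Xc < A (σ j) := by
    intro j hj
    refine lt_of_lt_of_le hX2 (hmono ?_)
    exact hj
  have hvcgt : ∀ j : Fin n, p < j → v (c - α (σ j)) = ((Xc : ℝ) : WithTop ℝ) := by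
    intro j hj
    have hlt := hjgt j hj
    rw [hsub c (α (σ j)) (by rw [hvc, hA]; exact_mod_cast hlt.ne), hvc, hA]
    exact_mod_cast min_eq_left hlt.le
  -- valuation of b - α (σ j) for j ≠ p
  have hvblt : ∀ j : Fin n, j < p → v (b - α (σ j)) = ((A (σ j) : ℝ) : WithTop ℝ) := by
    intro j hj
    have hlt : A (σ j) < A (σ p) := hord hj
    rw [hsub b (α (σ j)) (by rw [hvb, hA]; exact_mod_cast hlt.ne'), hvb, hA]
    rw [min_comm]
    exact_mod_cast min_eq_left hlt.le
  have hvbgt : ∀ j : Fin n, p < j → v (b - α (σ j)) = ((A (σ p) : ℝ) : WithTop ℝ) := by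
    intro j hj
    have hlt : A (σ p) < A (σ j) := lt_trans hX1 (hjgt j hj)
    rw [hsub b (α (σ j)) (by rw [hvb, hA]; exact_mod_cast hlt.ne), hvb, hA]
    exact_mod_cast min_eq_left hlt.le
  -- real values rc
  set rc : Fin n → ℝ := fun j => if j ≤ p then A (σ j) else Xc with hrc
  have hvc' : ∀ j : Fin n, v (c - α (σ j)) = ((rc j : ℝ) : WithTop ℝ) := by
    intro j
    by_cases h : j ≤ p
    · rw [hrc]; simp only [h, if_true]; exact hvcle j h
    · rw [hrc]; simp only [h, if_false]; exact hvcgt j (not_le.mp h)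
  -- all c - α i are nonzero, hence b - α i are nonzero
  have hc0 : ∀ i : Fin n, c - α i ≠ 0 := by
    intro i
    have h := hvc' (σ.symm i)
    rw [Equiv.apply_symm_apply] at h
    exact hfin _ _ h
  have hprodc0 : ∏ i : Fin n, (c - α i) ≠ 0 := Finset.prod_ne_zero_iff.mpr fun i _ => hc0 i
  have hb0 : ∀ i : Fin n, b - α i ≠ 0 := by
    intro i
    have h := Finset.prod_ne_zero_iff.mp (hprod ▸ hprodc0)
    exact h i (Finset.mem_univ i)
  -- extract real value of v (b - α (σ p))
  have hnetop : v (b - α (σ p)) ≠ ⊤ := (hv_top _).not.mpr (hb0 (σ p))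
  obtain ⟨r, hr⟩ := WithTop.ne_top_iff_exists.mp hnetop
  -- real values rb
  set rb : Fin n → ℝ := fun j => if j < p then A (σ j) else if j = p then r else A (σ p)
    with hrb
  have hvb' : ∀ j : Fin n, v (b - α (σ j)) = ((rb j : ℝ) : WithTop ℝ) := by
    intro j
    rcases lt_trichotomy j p with h | h | h
    · rw [hrb]; simp only [h, if_true]; exact hvblt j h
    · rw [hrb]; simp only [h, lt_irrefl, if_false, if_true, ← hr]
    · rw [hrb]; simp only [not_lt.mpr h.le, h.ne', if_false]; exact hvbgt j h
  -- the product identity gives the sum identity in ℝ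
  have hsumeq : ∑ j : Fin n, rb j = ∑ j : Fin n, rc j := by
    have h1 : v (∏ i : Fin n, (b - α i)) = v (∏ i : Fin n, (c - α i)) := by rw [hprod]
    rw [hvprod, hvprod] at h1
    rw [← Equiv.sum_comp σ (fun i => v (b - α i)), ← Equiv.sum_comp σ (fun i => v (c - α i))]
      at h1
    simp only [hvb', hvc'] at h1
    rw [← WithTop.coe_sum, ← WithTop.coe_sum] at h1
    exact_mod_cast h1
  have hzero : ∑ j : Fin n, (rc j - rb j) = 0 := by
    rw [Finset.sum_sub_distrib, hsumeq, sub_self]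
  -- compute r
  have hcard : #(Finset.Ioi p) = n - 1 - (p : ℕ) := Fin.card_Ioi p
  have hfilter : (Finset.univ.erase p).filter (fun j => ¬ j < p) = Finset.Ioi p := by
    ext j
    simp only [Finset.mem_filter, Finset.mem_erase, Finset.mem_univ, and_true, true_and,
      Finset.mem_Ioi, not_lt]
    constructor
    · rintro ⟨hne, hle⟩; exact lt_of_le_of_ne hle (Ne.symm hne)
    · intro h; exact ⟨h.ne', h.le⟩
  have hsplit : ∀ j ∈ Finset.univ.erase p, rc j - rb j =
      (if j < p then 0 else Xc - A (σ p)) := by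
    intro j hj
    have hne : j ≠ p := (Finset.mem_erase.mp hj).1
    rcases lt_trichotomy j p with h | h | h
    · simp [hrb, hrc, h, h.le]
    · exact absurd h hne
    · simp [hrb, hrc, not_lt.mpr h.le, not_le.mpr h, hne]
  have hcast : ((n - 1 - (p : ℕ) : ℕ) : ℝ) = (n : ℝ) - (p : ℕ) - 1 := by
    have h1 : n - 1 - (p : ℕ) = n - ((p : ℕ) + 1) := by omega
    rw [h1, Nat.cast_sub hp.le]
    push_cast
    ring
  have hkey : r = A (σ p) + ((n : ℝ) - (p : ℕ) - 1) * (Xc - A (σ p)) := by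
    have h0 := hzero
    rw [← Finset.sum_erase_add _ _ (Finset.mem_univ p)] at h0
    rw [Finset.sum_congr rfl hsplit] at h0
    rw [Finset.sum_ite, Finset.sum_const, Finset.sum_const, hfilter, hcard] at h0
    have hrcp : rc p = A (σ p) := by simp [hrc]
    have hrbp : rb p = r := by simp [hrb]
    rw [hrcp, hrbp] at h0
    simp only [smul_zero, zero_add, nsmul_eq_mul, hcast] at h0
    linarith
  -- valuation of B (σ j)
  have hBv : ∀ j : Fin n, v (B (σ j)) = ((rb j - rc j : ℝ) : WithTop ℝ) := by
    intro j
    rw [hB]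
    exact hdiv _ _ _ _ (hvb' j) (hvc' j)
  refine ⟨?_, ?_, ?_, ?_⟩
  · intro j hj
    rw [hBv]
    have : rb j - rc j = 0 := by simp [hrb, hrc, hj, hj.le]
    rw [this]
  · rw [hBv]
    have h1 : rb p = r := by simp [hrb]
    have h2 : rc p = A (σ p) := by simp [hrc]
    rw [h1, h2, hkey]
    norm_num
  · intro j hj
    rw [hBv]
    have : rb j - rc j = A (σ p) - Xc := by
      simp [hrb, hrc, not_lt.mpr hj.le, not_le.mpr hj, hj.ne']
    rw [this]
  · rw [Finset.sum_congr rfl (fun j _ => hBv j), ← WithTop.coe_sum]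
    have : ∑ j : Fin n, (rb j - rc j) = 0 := by
      rw [Finset.sum_sub_distrib, hsumeq, sub_self]
    rw [this]
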